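/- If P is a 1-dominated m-homogeneous polynomial from E to F and φ ∈ E', then the (m+1)-homogeneous polynomial Q(x) = φ(x)·P(x) is 1-dominated. -/

import Mathlib

open MeasureTheory

section Aux

variable {α : Type*} [TopologicalSpace α] [MeasurableSpace α]

lemma outerRegular_add (μ ν : Measure α) [μ.Regular] [ν.Regular]
    [IsFiniteMeasure μ] [IsFiniteMeasure ν] : (μ + ν).OuterRegular := by
  constructor
  intro A hA r hr
  rcases eq_or_ne r ⊤ with rfl | hrtop
  · exact ⟨Set.univ, Set.subset_univ _, isOpen_univ, measure_lt_top _ _⟩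
  · set s := (μ + ν) A with hs
    have hslt : s < r := hr
    set ε := (r - s) / 2 with hε
    have hrs : r - s ≠ 0 := by simpa [tsub_eq_zero_iff_le] using not_le_of_gt hslt
    have hε0 : ε ≠ 0 := by simp [hε, ENNReal.div_eq_zero_iff, hrs]
    have hε20 : ε / 2 ≠ 0 := by simp [ENNReal.div_eq_zero_iff, hε0]
    obtain ⟨U₁, hAU₁, hU₁o, hU₁⟩ := Set.exists_isOpen_le_add A μ hε20
    obtain ⟨U₂, hAU₂, hU₂o, hU₂⟩ := Set.exists_isOpen_le_add A ν hε20
    refine ⟨U₁ ∩ U₂, Set.subset_inter hAU₁ hAU₂, hU₁o.inter hU₂o, ?_⟩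
    have h1 : (μ + ν) (U₁ ∩ U₂) ≤ s + ε := by
      rw [Measure.add_apply]
      calc μ (U₁ ∩ U₂) + ν (U₁ ∩ U₂) ≤ μ U₁ + ν U₂ :=
            add_le_add (measure_mono Set.inter_subset_left)
              (measure_mono Set.inter_subset_right)
        _ ≤ (μ A + ε / 2) + (ν A + ε / 2) := add_le_add hU₁ hU₂
        _ = s + ε := by
            rw [hs, Measure.add_apply, add_add_add_comm, ENNReal.add_halves]
    have h2 : s + ε < r := by
      have hεlt : ε < r - s := ENNReal.half_lt_self
        (by simpa [tsub_eq_zero_iff_le] using not_le_of_gt hslt)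
        (by simp [hε, hrtop, ENNReal.sub_eq_top_iff])
      calc s + ε < s + (r - s) := ENNReal.add_lt_add_left (ne_top_of_lt hslt) hεlt
        _ = r := add_tsub_cancel_of_le hslt.le
    exact h1.trans_lt h2

lemma regular_add (μ ν : Measure α) [μ.Regular] [ν.Regular]
    [IsFiniteMeasure μ] [IsFiniteMeasure ν] : (μ + ν).Regular := by
  haveI := outerRegular_add μ ν
  refine ⟨?_⟩
  intro U hU r hr
  have hμ : ∀ ρ : Measure α, ρ.Regular →
      ρ U = ⨆ K : {K : Set α // K ⊆ U ∧ IsCompact K}, ρ (K : Set α) := by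
    intro ρ hρ
    rw [hU.measure_eq_iSup_isCompact ρ]
    apply le_antisymm
    · exact iSup_le fun K => iSup_le fun hKU => iSup_le fun hKc =>
        le_iSup (fun K : {K : Set α // K ⊆ U ∧ IsCompact K} => ρ (K : Set α)) ⟨K, hKU, hKc⟩
    · exact iSup_le fun K => le_iSup_of_le K.1 (le_iSup_of_le K.2.1 (le_iSup_of_le K.2.2 le_rfl))
  have hdir : ∀ i j : {K : Set α // K ⊆ U ∧ IsCompact K},
      ∃ k : {K : Set α // K ⊆ U ∧ IsCompact K}, μ (i : Set α) + ν (j : Set α) ≤ μ (k : Set α) + ν (k : Set α) := by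
    intro i j
    refine ⟨⟨i.1 ∪ j.1, Set.union_subset i.2.1 j.2.1, i.2.2.union j.2.2⟩, ?_⟩
    exact add_le_add (measure_mono Set.subset_union_left) (measure_mono Set.subset_union_right)
  rw [Measure.add_apply, hμ μ inferInstance, hμ ν inferInstance,
    ENNReal.iSup_add_iSup hdir] at hr
  obtain ⟨⟨K, hKU, hKc⟩, hK⟩ := lt_iSup_iff.mp hr
  exact ⟨K, hKU, hKc, by rw [Measure.add_apply]; exact hK⟩

lemma regular_dirac [BorelSpace α] [T2Space α] (a : α) : (Measure.dirac a).Regular := by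
  have hOuter : (Measure.dirac a).OuterRegular := by
    constructor
    intro A hA r hr
    by_cases haA : a ∈ A
    · refine ⟨Set.univ, Set.subset_univ _, isOpen_univ, ?_⟩
      have h0 : Measure.dirac a Set.univ = 1 := by simp
      have h1 : Measure.dirac a A = 1 := by
        rw [Measure.dirac_apply' a hA]; simp [haA]
      rw [h0, ← h1]; exact hr
    · refine ⟨{a}ᶜ, Set.subset_compl_singleton_iff.mpr haA, isClosed_singleton.isOpen_compl, ?_⟩
      have h0 : Measure.dirac a {a}ᶜ = 0 := by
        rw [Measure.dirac_apply' a isClosed_singleton.measurableSet.compl]; simp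
      rw [h0]; exact lt_of_le_of_lt zero_le hr
  refine ⟨?_⟩
  intro U hU r hr
  by_cases haU : a ∈ U
  · refine ⟨{a}, Set.singleton_subset_iff.mpr haU, isCompact_singleton, ?_⟩
    have h1 : Measure.dirac a {a} = 1 := by
      rw [Measure.dirac_apply' a isClosed_singleton.measurableSet]; simp
    have h2 : Measure.dirac a U ≤ 1 := prob_le_one
    rw [h1]; exact hr.trans_le h2
  · exfalso
    have h0 : Measure.dirac a U = 0 := by
      rw [Measure.dirac_apply' a hU.measurableSet]; simp [haU]
    rw [h0] at hr
    exact (not_lt_of_ge (zero_le (a := r))) hr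

end Aux

/-- The closed unit ball of the dual of `E`, with the weak-star topology. -/
def dualBall (𝕜 E : Type) [RCLike 𝕜] [NormedAddCommGroup E] [NormedSpace 𝕜 E] :
    Set (WeakDual 𝕜 E) := {φ | ∀ x, ‖φ x‖ ≤ ‖x‖}

noncomputable instance (𝕜 E : Type) [RCLike 𝕜] [NormedAddCommGroup E] [NormedSpace 𝕜 E] :
    MeasurableSpace (dualBall 𝕜 E) := borel _

instance dualBall.borelSpace (𝕜 E : Type) [RCLike 𝕜] [NormedAddCommGroup E] [NormedSpace 𝕜 E] :
    BorelSpace (dualBall 𝕜 E) := ⟨rfl⟩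

/-- `P` is a 1-dominated `m`-homogeneous polynomial: there are `C ≥ 0` and a regular Borel
probability measure `μ` on the dual unit ball (weak-star topology) with
`‖P x‖ ≤ C * (∫ |φ x| dμ)^m`. -/
def IsDominated1 (𝕜 : Type) [RCLike 𝕜] {E F : Type} [NormedAddCommGroup E] [NormedSpace 𝕜 E]
    [NormedAddCommGroup F] [NormedSpace 𝕜 F] (m : ℕ) (P : E → F) : Prop :=
  ∃ (C : ℝ) (μ : Measure (dualBall 𝕜 E)), 0 ≤ C ∧ IsProbabilityMeasure μ ∧ μ.Regular ∧
    ∀ x, ‖P x‖ ≤ C * (∫ φ, ‖(φ : WeakDual 𝕜 E) x‖ ∂μ) ^ m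

/-- If `P` is a 1-dominated `m`-homogeneous polynomial and `φ ∈ E'`, then
`x ↦ φ(x) • P(x)` is a 1-dominated `(m+1)`-homogeneous polynomial. -/
theorem dominated_mul_functional {𝕜 E F : Type} [RCLike 𝕜]
    [NormedAddCommGroup E] [NormedSpace 𝕜 E] [CompleteSpace E]
    [NormedAddCommGroup F] [NormedSpace 𝕜 F] [CompleteSpace F]
    (m : ℕ) (P : E → F)
    (S : ContinuousMultilinearMap 𝕜 (fun _ : Fin m => E) F)
    (hdiag : ∀ x, P x = S fun _ => x)
    (hP : IsDominated1 𝕜 m P) (φ : E →L[𝕜] 𝕜) :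
    IsDominated1 𝕜 (m + 1) (fun x => φ x • P x) := by
  obtain ⟨C, μ, hC, hμp, hμr, hb⟩ := hP
  set g : WeakDual 𝕜 E := StrongDual.toWeakDual (‖φ‖⁻¹ • φ) with hgdef
  have hginv : ‖φ‖⁻¹ * ‖φ‖ ≤ 1 := by
    rcases eq_or_ne ‖φ‖ 0 with h | h
    · simp [h]
    · simp [inv_mul_cancel₀ h]
  have hgapp : ∀ y, g y = ‖φ‖⁻¹ • φ y := fun y => rfl
  have hgball : g ∈ dualBall 𝕜 E := by
    intro y
    rw [hgapp, norm_smul, norm_inv, norm_norm]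
    calc ‖φ‖⁻¹ * ‖φ y‖ ≤ ‖φ‖⁻¹ * (‖φ‖ * ‖y‖) := by
          gcongr
          exact φ.le_opNorm y
      _ = (‖φ‖⁻¹ * ‖φ‖) * ‖y‖ := by ring
      _ ≤ 1 * ‖y‖ := mul_le_mul_of_nonneg_right hginv (norm_nonneg y)
      _ = ‖y‖ := one_mul _
  set ψ₀ : dualBall 𝕜 E := ⟨g, hgball⟩ with hψ₀
  set ν : Measure (dualBall 𝕜 E) :=
    (2⁻¹ : ENNReal) • μ + (2⁻¹ : ENNReal) • Measure.dirac ψ₀ with hν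
  haveI hfin1 : IsFiniteMeasure ((2⁻¹ : ENNReal) • μ) := by
    constructor
    rw [Measure.smul_apply, measure_univ, smul_eq_mul, mul_one]
    exact ENNReal.inv_lt_top.mpr (by norm_num)
  haveI hfin2 : IsFiniteMeasure ((2⁻¹ : ENNReal) • Measure.dirac ψ₀) := by
    constructor
    rw [Measure.smul_apply, measure_univ, smul_eq_mul, mul_one]
    exact ENNReal.inv_lt_top.mpr (by norm_num)
  haveI hreg1 : ((2⁻¹ : ENNReal) • μ).Regular := Measure.Regular.smul (by norm_num)
  haveI hregd : (Measure.dirac ψ₀).Regular := regular_dirac ψ₀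
  haveI hreg2 : ((2⁻¹ : ENNReal) • Measure.dirac ψ₀).Regular := Measure.Regular.smul (by norm_num)
  have hνp : IsProbabilityMeasure ν := by
    constructor
    rw [hν, Measure.add_apply, Measure.smul_apply, Measure.smul_apply, measure_univ,
      measure_univ, smul_eq_mul, mul_one, ← one_div, ENNReal.add_halves]
  refine ⟨C * ‖φ‖ * 2 ^ (m + 1), ν, by positivity, hνp, regular_add _ _, fun x => ?_⟩
  have hfc : Continuous (fun ψ : dualBall 𝕜 E => ‖(ψ : WeakDual 𝕜 E) x‖) :=
    ((WeakDual.eval_continuous x).comp continuous_subtype_val).norm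
  have hfint : ∀ (ρ : Measure (dualBall 𝕜 E)) [IsFiniteMeasure ρ],
      Integrable (fun ψ : dualBall 𝕜 E => ‖(ψ : WeakDual 𝕜 E) x‖) ρ := by
    intro ρ _
    refine (integrable_const ‖x‖).mono' hfc.aestronglyMeasurable ?_
    exact Filter.Eventually.of_forall fun ψ => by simpa using ψ.2 x
  have hI : (∫ ψ, ‖(ψ : WeakDual 𝕜 E) x‖ ∂ν)
      = 2⁻¹ * (∫ ψ, ‖(ψ : WeakDual 𝕜 E) x‖ ∂μ) + 2⁻¹ * ‖g x‖ := by
    rw [hν, integral_add_measure (hfint _) (hfint _), integral_smul_measure,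
      integral_smul_measure, integral_dirac]
    simp
    rfl
  set I := ∫ ψ, ‖(ψ : WeakDual 𝕜 E) x‖ ∂μ with hIdef
  set u := ‖g x‖ with hudef
  have hI0 : 0 ≤ I := integral_nonneg fun _ => norm_nonneg _
  have hu0 : 0 ≤ u := norm_nonneg _
  have hφx : ‖φ x‖ ≤ ‖φ‖ * u := by
    have hu : u = ‖φ‖⁻¹ * ‖φ x‖ := by
      rw [hudef, hgapp, norm_smul, norm_inv, norm_norm]
    rcases eq_or_ne ‖φ‖ 0 with h | h
    · have : φ = 0 := norm_eq_zero.mp h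
      simp [this, hu0]
    · rw [hu, ← mul_assoc, mul_inv_cancel₀ h, one_mul]
  calc ‖φ x • P x‖ = ‖φ x‖ * ‖P x‖ := norm_smul _ _
    _ ≤ (‖φ‖ * u) * (C * I ^ m) :=
        mul_le_mul hφx (hb x) (norm_nonneg _) (by positivity)
    _ = (C * ‖φ‖) * (u * I ^ m) := by ring
    _ ≤ (C * ‖φ‖) * ((u + I) ^ (m + 1)) := by
        refine mul_le_mul_of_nonneg_left ?_ (by positivity)
        calc u * I ^ m ≤ (u + I) * (u + I) ^ m :=
              mul_le_mul (le_add_of_nonneg_right hI0)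
                (pow_le_pow_left₀ hI0 (le_add_of_nonneg_left hu0) m)
                (by positivity) (by positivity)
          _ = (u + I) ^ (m + 1) := (pow_succ' _ _).symm
    _ = (C * ‖φ‖ * 2 ^ (m + 1)) * ((2⁻¹ * I + 2⁻¹ * u) ^ (m + 1)) := by
        have h2 : u + I = 2 * (2⁻¹ * I + 2⁻¹ * u) := by ring
        rw [h2, mul_pow]; ring
    _ = (C * ‖φ‖ * 2 ^ (m + 1)) * (∫ ψ, ‖(ψ : WeakDual 𝕜 E) x‖ ∂ν) ^ (m + 1) := by
        rw [hI]
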